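/- Fix C > 0 and an integer K ≥ 1, and let S = { −C + 2C·t/K : t = 0, 1, …, K−1 } ⊂ ℝ. Let x_1,…,x_n ∈ ℝ^d be vectors all of whose coordinates lie in S, and assume the x_i are not all equal. For each i ∈ {1,…,n} let K_i = #{ s ∈ {1,…,n} : ‖x_s − x_i‖₂ < 2C/K } (so 1 ≤ K_i < n), set w_{ij} = 1/(K_i·(n − K_i)) for i ≠ j, and let Υ(z) = 0 if z < 2C/K and Υ(z) = 1 if z ≥ 2C/K. Then Σ_{i=1}^n Σ_{j=1}^n w_{ij}·Υ(‖x_i − x_j‖₂) equals the number of distinct vectors among x_1,…,x_n. -/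

import Mathlib

open BigOperators

lemma coord_le_norm {d : ℕ} (y : EuclideanSpace ℝ (Fin d)) (j : Fin d) : |y j| ≤ ‖y‖ := by
  rw [EuclideanSpace.norm_eq]
  have h1 : |y j| = Real.sqrt (‖y j‖ ^ 2) := by
    rw [Real.sqrt_sq_eq_abs]; simp
  rw [h1]
  apply Real.sqrt_le_sqrt
  exact Finset.single_le_sum (f := fun i => ‖y i‖ ^ 2) (fun i _ => by positivity) (Finset.mem_univ j)

theorem weighted_pairwise_sum_counts_groups (C : ℝ) (hC : 0 < C) (K : ℕ) (hK : 1 ≤ K)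
    (n d : ℕ) (hn : 0 < n) (x : Fin n → EuclideanSpace ℝ (Fin d))
    (hS : ∀ i j, ∃ t : ℕ, t < K ∧ x i j = -C + 2 * C * t / K)
    (hne : ∃ i j, x i ≠ x j)
    (Ki : Fin n → ℕ)
    (hKi : ∀ i, Ki i = (Finset.univ.filter fun s => ‖x s - x i‖ < 2 * C / K).card) :
    ∑ i, ∑ j, (1 / ((Ki i : ℝ) * ((n : ℝ) - (Ki i : ℝ)))) *
        (if ‖x i - x j‖ < 2 * C / K then (0 : ℝ) else 1)
      = ((Set.range x).ncard : ℝ) := by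
  classical
  have hKpos : (0:ℝ) < K := by exact_mod_cast hK
  have key : ∀ s i : Fin n, ‖x s - x i‖ < 2 * C / K ↔ x s = x i := by
    intro s i
    constructor
    · intro h
      by_contra hne'
      obtain ⟨j, hj⟩ : ∃ j, x s j ≠ x i j := by
        by_contra hall
        push_neg at hall
        exact hne' (PiLp.ext hall)
      obtain ⟨t, ht, hts⟩ := hS s j
      obtain ⟨t', ht', hts'⟩ := hS i j
      have hd : x s j - x i j = 2 * C / K * ((t:ℝ) - t') := by
        rw [hts, hts']; field_simp; ring
      have htne : (t:ℝ) ≠ t' := by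
        intro he
        exact hj (by rw [hts, hts', he])
      have h1 : (1:ℝ) ≤ |(t:ℝ) - t'| := by
        have h0 : (t:ℤ) ≠ t' := by exact_mod_cast htne
        have := Int.one_le_abs (sub_ne_zero.mpr h0)
        calc (1:ℝ) ≤ ((|(t:ℤ) - t'| : ℤ) : ℝ) := by exact_mod_cast this
          _ = |(t:ℝ) - t'| := by push_cast; simp
      have h2 : |x s j - x i j| ≤ ‖x s - x i‖ := by
        simpa using coord_le_norm (x s - x i) j
      have h3 : 2 * C / K ≤ |x s j - x i j| := by
        rw [hd, abs_mul, abs_of_pos (show (0:ℝ) < 2 * C / K by positivity)]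
        have := mul_le_mul_of_nonneg_left h1 (le_of_lt (show (0:ℝ) < 2 * C / K by positivity))
        linarith
      linarith
    · intro h
      rw [h]
      simp only [sub_self, norm_zero]
      positivity
  have hKi' : ∀ i, Ki i = (Finset.univ.filter fun s => x s = x i).card := by
    intro i
    rw [hKi i]
    congr 1
    apply Finset.filter_congr
    intro s _
    simp [key s i]
  have hKipos : ∀ i, 0 < Ki i := by
    intro i
    rw [hKi' i]
    exact Finset.card_pos.mpr ⟨i, by simp⟩
  have hKilt : ∀ i, Ki i < n := by
    intro i
    rw [hKi' i]
    obtain ⟨a, b, hab⟩ := hne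
    have hex : ∃ c, x c ≠ x i := by
      by_contra hc
      push_neg at hc
      exact hab ((hc a).trans (hc b).symm)
    obtain ⟨c, hc⟩ := hex
    calc (Finset.univ.filter fun s => x s = x i).card
        < Finset.univ.card := Finset.card_lt_card (by
          rw [Finset.ssubset_iff_of_subset (Finset.filter_subset _ _)]
          exact ⟨c, Finset.mem_univ c, by simp [hc]⟩)
      _ = n := by simp
  have inner : ∀ i, ∑ j, (if ‖x i - x j‖ < 2 * C / K then (0:ℝ) else 1) = (n : ℝ) - Ki i := by
    intro i
    have heq : ∀ j, (if ‖x i - x j‖ < 2 * C / K then (0:ℝ) else 1)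
        = if x j = x i then 0 else 1 := by
      intro j
      rw [norm_sub_rev]
      exact if_congr (key j i) rfl rfl
    simp_rw [heq]
    have h5 : (Finset.univ.filter fun j => ¬ x j = x i).card = n - Ki i := by
      rw [hKi' i, Finset.filter_not, Finset.card_sdiff_of_subset (Finset.filter_subset _ _)]
      simp
    calc ∑ j, (if x j = x i then (0:ℝ) else 1)
        = ((Finset.univ.filter fun j => ¬ x j = x i).card : ℝ) := by
          simp [Finset.sum_ite]
      _ = (n : ℝ) - Ki i := by
          rw [h5]
          push_cast [Nat.cast_sub (le_of_lt (hKilt i))]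
          ring
  have step1 : ∑ i, ∑ j, (1 / ((Ki i : ℝ) * ((n : ℝ) - (Ki i : ℝ)))) *
      (if ‖x i - x j‖ < 2 * C / K then (0 : ℝ) else 1) = ∑ i, 1 / (Ki i : ℝ) := by
    apply Finset.sum_congr rfl
    intro i _
    rw [← Finset.mul_sum, inner i]
    have h6 : (Ki i : ℝ) ≠ 0 := by exact_mod_cast (hKipos i).ne'
    have h7 : (n : ℝ) - Ki i ≠ 0 := by
      have : (Ki i : ℝ) < n := by exact_mod_cast hKilt i
      linarith
    field_simp
  rw [step1]
  -- group by fiber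
  have step2 : ∑ i, 1 / (Ki i : ℝ) = (Finset.univ.image x).card := by
    rw [← Finset.sum_fiberwise_of_maps_to
      (fun i _ => Finset.mem_image_of_mem x (Finset.mem_univ i)) (fun i => 1 / (Ki i : ℝ))]
    rw [Finset.card_eq_sum_ones (Finset.univ.image x)]
    push_cast
    apply Finset.sum_congr rfl
    intro v hv
    have hfib : ∀ i ∈ Finset.univ.filter fun i => x i = v,
        (1 : ℝ) / (Ki i : ℝ) = 1 / ((Finset.univ.filter fun i => x i = v).card : ℝ) := by
      intro i hi
      rw [Finset.mem_filter] at hi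
      rw [hKi' i, hi.2]
    rw [Finset.sum_congr rfl hfib, Finset.sum_const, nsmul_eq_mul]
    obtain ⟨i, _, hiv⟩ := Finset.mem_image.mp hv
    have hpos : 0 < (Finset.univ.filter fun i => x i = v).card :=
      Finset.card_pos.mpr ⟨i, by simp [hiv]⟩
    field_simp
  rw [step2]
  congr 1
  rw [← Set.ncard_coe_finset]
  congr 1
  simp [Finset.coe_image]
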